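/- General Ordinal Sum Theorem: Let G ≅ ⟨a | b⟩ be a ball with a, b and G numbers. Suppose, as values, b − G ≤ 1, and define positive integers α₁, α₂, … recursively by letting αᵢ be the least positive integer such that 2^{−αᵢ} < (b − G) − Σ_{j=1}^{i−1} 2^{−αⱼ} (each αᵢ exists since the remainder is a positive dyadic rational). Then for every positive integer k, taken in canonical form, G : k = G + Σ_{i=1}^{k} 2^{−αᵢ}. Dually, if G − a ≤ 1 and βᵢ is the least positive integer such that 2^{−βᵢ} < (G − a) − Σ_{j=1}^{i−1} 2^{−βⱼ}, then G : (−k) = G − Σ_{i=1}^{k} 2^{−βᵢ}. -/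

import Mathlib

/-! The combinatorial game theory of Mathlib (`SetTheory.PGame`, `SetTheory.Game`,
`PGame.Numeric`, `PGame.powHalf`) has been removed from Mathlib; it is re-created here with
its old definitions and meaning. -/
namespace SetTheory

universe u

inductive PGame : Type (u + 1)
  | mk : ∀ α β : Type u, (α → PGame) → (β → PGame) → PGame

namespace PGame

def LeftMoves : PGame → Type u
  | mk l _ _ _ => l

def RightMoves : PGame → Type u
  | mk _ r _ _ => r

def moveLeft : ∀ g : PGame, LeftMoves g → PGame
  | mk _ _ L _ => L

def moveRight : ∀ g : PGame, RightMoves g → PGame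
  | mk _ _ _ R => R

def leAuxR (xl xr : Type u) (IHl : xl → PGame.{u} → Prop × Prop)
    (IHr : xr → PGame.{u} → Prop × Prop) : PGame.{u} → Prop × Prop
  | mk yl yr yL yR =>
    ((∀ i, ¬ (IHl i (mk yl yr yL yR)).2) ∧ (∀ j, ¬ (leAuxR xl xr IHl IHr (yR j)).2),
     (∀ j, ¬ (leAuxR xl xr IHl IHr (yL j)).1) ∧ (∀ i, ¬ (IHr i (mk yl yr yL yR)).1))

def leAux : PGame.{u} → PGame.{u} → Prop × Prop
  | mk xl xr xL xR => leAuxR xl xr (fun i => leAux (xL i)) (fun i => leAux (xR i))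

theorem leAux_swap (x y : PGame.{u}) :
    ((leAux x y).2 ↔ (leAux y x).1) ∧ ((leAux y x).2 ↔ (leAux x y).1) := by
  induction x generalizing y with
  | mk xl xr xL xR IHl IHr =>
  induction y with
  | mk yl yr yL yR JHl JHr =>
  constructor
  · show ((∀ j, ¬ (leAux (mk xl xr xL xR) (yL j)).1) ∧
        (∀ i, ¬ (leAux (xR i) (mk yl yr yL yR)).1)) ↔
      ((∀ j, ¬ (leAux (yL j) (mk xl xr xL xR)).2) ∧
        (∀ i, ¬ (leAux (mk yl yr yL yR) (xR i)).2))
    exact Iff.and (forall_congr' fun j => not_congr (JHl j).2.symm)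
      (forall_congr' fun i => not_congr (IHr i _).2.symm)
  · show ((∀ j, ¬ (leAux (mk yl yr yL yR) (xL j)).1) ∧
        (∀ i, ¬ (leAux (yR i) (mk xl xr xL xR)).1)) ↔
      ((∀ i, ¬ (leAux (xL i) (mk yl yr yL yR)).2) ∧
        (∀ j, ¬ (leAux (mk xl xr xL xR) (yR j)).2))
    exact Iff.and (forall_congr' fun j => not_congr (IHl j _).1.symm)
      (forall_congr' fun i => not_congr (JHr i).1.symm)

instance : LE PGame.{u} := ⟨fun x y => (leAux x y).1⟩

theorem mk_le_mk {xl xr : Type u} {xL : xl → PGame.{u}} {xR : xr → PGame.{u}}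
    {yl yr : Type u} {yL : yl → PGame.{u}} {yR : yr → PGame.{u}} :
    mk xl xr xL xR ≤ mk yl yr yL yR ↔
      (∀ i, ¬ mk yl yr yL yR ≤ xL i) ∧ (∀ j, ¬ yR j ≤ mk xl xr xL xR) := by
  show ((∀ i, ¬ (leAux (xL i) (mk yl yr yL yR)).2) ∧
      (∀ j, ¬ (leAux (mk xl xr xL xR) (yR j)).2)) ↔ _
  exact Iff.and (forall_congr' fun i => not_congr (leAux_swap _ _).1)
    (forall_congr' fun j => not_congr (leAux_swap _ _).1)

theorem le_def {x y : PGame.{u}} :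
    x ≤ y ↔ (∀ i, ¬ y ≤ x.moveLeft i) ∧ (∀ j, ¬ y.moveRight j ≤ x) := by
  cases x; cases y; exact mk_le_mk

theorem not_le_iff {x y : PGame.{u}} :
    ¬ y ≤ x ↔ (∃ i, x ≤ y.moveLeft i) ∨ (∃ j, x.moveRight j ≤ y) := by
  rw [le_def]; simp only [not_and_or, not_forall, not_not]

theorem lf_of_le_moveLeft {x y : PGame.{u}} {i : y.LeftMoves} (h : x ≤ y.moveLeft i) :
    ¬ y ≤ x := not_le_iff.2 (Or.inl ⟨i, h⟩)

theorem lf_of_moveRight_le {x y : PGame.{u}} {j : x.RightMoves} (h : x.moveRight j ≤ y) :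
    ¬ y ≤ x := not_le_iff.2 (Or.inr ⟨j, h⟩)

theorem moveLeft_lf_of_le {x y : PGame.{u}} (h : x ≤ y) (i : x.LeftMoves) :
    ¬ y ≤ x.moveLeft i := (le_def.1 h).1 i

theorem lf_moveRight_of_le {x y : PGame.{u}} (h : x ≤ y) (j : y.RightMoves) :
    ¬ y.moveRight j ≤ x := (le_def.1 h).2 j

theorem pg_le_refl (x : PGame.{u}) : x ≤ x := by
  induction x with
  | mk xl xr xL xR IHl IHr =>
    exact le_def.2 ⟨fun i => lf_of_le_moveLeft (IHl i), fun j => lf_of_moveRight_le (IHr j)⟩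

theorem le_trans_aux (x y z : PGame.{u}) :
    (x ≤ y → y ≤ z → x ≤ z) ∧ (y ≤ z → z ≤ x → y ≤ x) ∧ (z ≤ x → x ≤ y → z ≤ y) := by
  induction x generalizing y z with
  | mk xl xr xL xR IHxl IHxr =>
  induction y generalizing z with
  | mk yl yr yL yR IHyl IHyr =>
  induction z with
  | mk zl zr zL zR IHzl IHzr =>
  refine ⟨fun h1 h2 => ?_, fun h1 h2 => ?_, fun h1 h2 => ?_⟩
  · refine le_def.2 ⟨fun i hz => ?_, fun k hz => ?_⟩
    · exact moveLeft_lf_of_le h1 i ((IHxl i _ _).2.1 h2 hz)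
    · exact lf_moveRight_of_le h2 k ((IHzr k).2.2 hz h1)
  · refine le_def.2 ⟨fun j hx => ?_, fun i hx => ?_⟩
    · exact moveLeft_lf_of_le h1 j ((IHyl j _).2.2 h2 hx)
    · exact lf_moveRight_of_le h2 i ((IHxr i _ _).1 hx h1)
  · refine le_def.2 ⟨fun k hy => ?_, fun j hy => ?_⟩
    · exact moveLeft_lf_of_le h1 k ((IHzl k).1 h2 hy)
    · exact lf_moveRight_of_le h2 j ((IHyr j _).2.1 hy h1)

theorem pg_le_trans {x y z : PGame.{u}} (h1 : x ≤ y) (h2 : y ≤ z) : x ≤ z :=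
  (le_trans_aux x y z).1 h1 h2

instance : Preorder PGame.{u} where
  le x y := x ≤ y
  le_refl := pg_le_refl
  le_trans _ _ _ := pg_le_trans

def Equiv (x y : PGame.{u}) : Prop := x ≤ y ∧ y ≤ x

instance setoid : Setoid PGame.{u} :=
  ⟨Equiv, ⟨fun x => ⟨pg_le_refl x, pg_le_refl x⟩, fun h => ⟨h.2, h.1⟩,
    fun h1 h2 => ⟨pg_le_trans h1.1 h2.1, pg_le_trans h2.2 h1.2⟩⟩⟩

instance : Zero PGame.{u} := ⟨⟨PEmpty, PEmpty, PEmpty.elim, PEmpty.elim⟩⟩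

instance : One PGame.{u} := ⟨⟨PUnit, PEmpty, fun _ => 0, PEmpty.elim⟩⟩

def neg : PGame.{u} → PGame.{u}
  | ⟨l, r, L, R⟩ => ⟨r, l, fun i => neg (R i), fun i => neg (L i)⟩

instance : Neg PGame.{u} := ⟨neg⟩

def addAux (xl xr : Type u) (IHl : xl → PGame.{u} → PGame.{u})
    (IHr : xr → PGame.{u} → PGame.{u}) : PGame.{u} → PGame.{u}
  | mk yl yr yL yR => mk (xl ⊕ yl) (xr ⊕ yr)
      (Sum.elim (fun i => IHl i (mk yl yr yL yR)) (fun j => addAux xl xr IHl IHr (yL j)))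
      (Sum.elim (fun i => IHr i (mk yl yr yL yR)) (fun j => addAux xl xr IHl IHr (yR j)))

def add : PGame.{u} → PGame.{u} → PGame.{u}
  | mk xl xr xL xR => addAux xl xr (fun i => add (xL i)) (fun i => add (xR i))

instance : Add PGame.{u} := ⟨add⟩

theorem exists_add_moveLeft_inl (x y : PGame.{u}) (i : x.LeftMoves) :
    ∃ k, (x + y).moveLeft k = x.moveLeft i + y := by
  cases x; cases y; exact ⟨Sum.inl i, rfl⟩

theorem exists_add_moveLeft_inr (x y : PGame.{u}) (i : y.LeftMoves) :
    ∃ k, (x + y).moveLeft k = x + y.moveLeft i := by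
  cases x; cases y; exact ⟨Sum.inr i, rfl⟩

theorem exists_add_moveRight_inl (x y : PGame.{u}) (j : x.RightMoves) :
    ∃ k, (x + y).moveRight k = x.moveRight j + y := by
  cases x; cases y; exact ⟨Sum.inl j, rfl⟩

theorem exists_add_moveRight_inr (x y : PGame.{u}) (j : y.RightMoves) :
    ∃ k, (x + y).moveRight k = x + y.moveRight j := by
  cases x; cases y; exact ⟨Sum.inr j, rfl⟩

theorem lf_add_of_le_inl {x a b : PGame.{u}} (i : a.LeftMoves)
    (h : x ≤ a.moveLeft i + b) : ¬ a + b ≤ x := by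
  obtain ⟨k, hk⟩ := exists_add_moveLeft_inl a b i
  exact lf_of_le_moveLeft (i := k) (by rw [hk]; exact h)

theorem lf_add_of_le_inr {x a b : PGame.{u}} (i : b.LeftMoves)
    (h : x ≤ a + b.moveLeft i) : ¬ a + b ≤ x := by
  obtain ⟨k, hk⟩ := exists_add_moveLeft_inr a b i
  exact lf_of_le_moveLeft (i := k) (by rw [hk]; exact h)

theorem add_lf_of_inl_le {y a b : PGame.{u}} (j : a.RightMoves)
    (h : a.moveRight j + b ≤ y) : ¬ y ≤ a + b := by
  obtain ⟨k, hk⟩ := exists_add_moveRight_inl a b j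
  exact lf_of_moveRight_le (j := k) (by rw [hk]; exact h)

theorem add_lf_of_inr_le {y a b : PGame.{u}} (j : b.RightMoves)
    (h : a + b.moveRight j ≤ y) : ¬ y ≤ a + b := by
  obtain ⟨k, hk⟩ := exists_add_moveRight_inr a b j
  exact lf_of_moveRight_le (j := k) (by rw [hk]; exact h)

theorem add_le_add_right_aux (x y z : PGame.{u}) :
    (x ≤ y → x + z ≤ y + z) ∧ (¬ y ≤ x → ¬ y + z ≤ x + z) := by
  induction z generalizing x y with
  | mk zl zr zL zR IHzl IHzr =>
  induction x generalizing y with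
  | mk xl xr xL xR IHxl IHxr =>
  induction y with
  | mk yl yr yL yR IHyl IHyr =>
  constructor
  · intro h
    refine le_def.2 ⟨?_, ?_⟩
    · rintro (i | k)
      · exact (IHxl i _).2 (moveLeft_lf_of_le h i)
      · exact lf_add_of_le_inr k ((IHzl k _ _).1 h)
    · rintro (j | k)
      · exact (IHyr j).2 (lf_moveRight_of_le h j)
      · exact add_lf_of_inr_le k ((IHzr k _ _).1 h)
  · intro h
    rcases not_le_iff.1 h with ⟨i, hi⟩ | ⟨j, hj⟩
    · exact lf_add_of_le_inl i ((IHyl i).1 hi)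
    · exact add_lf_of_inl_le j ((IHxr j _).1 hj)

theorem add_comm_le (x y : PGame.{u}) : x + y ≤ y + x := by
  induction x generalizing y with
  | mk xl xr xL xR IHxl IHxr =>
  induction y with
  | mk yl yr yL yR IHyl IHyr =>
  refine le_def.2 ⟨?_, ?_⟩
  · rintro (i | j)
    · exact lf_add_of_le_inr i (IHxl i _)
    · exact lf_add_of_le_inl j (IHyl j)
  · rintro (j | i)
    · exact add_lf_of_inr_le j (IHyr j)
    · exact add_lf_of_inl_le i (IHxr i _)

theorem add_assoc_aux (x y z : PGame.{u}) :
    (x + y) + z ≤ x + (y + z) ∧ x + (y + z) ≤ (x + y) + z := by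
  induction x generalizing y z with
  | mk xl xr xL xR IHxl IHxr =>
  induction y generalizing z with
  | mk yl yr yL yR IHyl IHyr =>
  induction z with
  | mk zl zr zL zR IHzl IHzr =>
  constructor
  · refine le_def.2 ⟨?_, ?_⟩
    · rintro ((i | j) | k)
      · exact lf_add_of_le_inl i (IHxl i _ _).1
      · exact lf_add_of_le_inr (Sum.inl j) (IHyl j _).1
      · exact lf_add_of_le_inr (Sum.inr k) (IHzl k).1
    · rintro (i | (j | k))
      · exact add_lf_of_inl_le (Sum.inl i) (IHxr i _ _).1
      · exact add_lf_of_inl_le (Sum.inr j) (IHyr j _).1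
      · exact add_lf_of_inr_le k (IHzr k).1
  · refine le_def.2 ⟨?_, ?_⟩
    · rintro (i | (j | k))
      · exact lf_add_of_le_inl (Sum.inl i) (IHxl i (mk yl yr yL yR) (mk zl zr zL zR)).2
      · exact lf_add_of_le_inl (Sum.inr j) (IHyl j _).2
      · exact lf_add_of_le_inr k (IHzl k).2
    · rintro ((i | j) | k)
      · exact add_lf_of_inl_le i (IHxr i _ _).2
      · exact add_lf_of_inr_le (Sum.inl j) (IHyr j _).2
      · exact add_lf_of_inr_le (Sum.inr k) (IHzr k).2

theorem zero_add_aux (x : PGame.{u}) : 0 + x ≤ x ∧ x ≤ 0 + x := by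
  induction x with
  | mk xl xr xL xR IHl IHr =>
  constructor
  · refine le_def.2 ⟨?_, ?_⟩
    · rintro (e | i)
      · exact e.elim
      · exact lf_of_le_moveLeft (i := i) (IHl i).1
    · intro j
      exact add_lf_of_inr_le j (IHr j).1
  · refine le_def.2 ⟨?_, ?_⟩
    · intro i
      exact lf_add_of_le_inr i (IHl i).2
    · rintro (e | j)
      · exact e.elim
      · exact lf_of_moveRight_le (j := j) (IHr j).2

theorem neg_add_aux (x : PGame.{u}) : -x + x ≤ 0 ∧ 0 ≤ -x + x := by
  induction x with
  | mk xl xr xL xR IHl IHr =>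
  constructor
  · refine le_def.2 ⟨?_, ?_⟩
    · rintro (i | i)
      · exact add_lf_of_inr_le (a := -(xR i)) (b := mk xl xr xL xR) i (IHr i).1
      · exact add_lf_of_inl_le (a := -(mk xl xr xL xR)) (b := xL i) i (IHl i).1
    · rintro ⟨⟩
  · refine le_def.2 ⟨?_, ?_⟩
    · rintro ⟨⟩
    · rintro (i | j)
      · exact lf_add_of_le_inr (a := -(xL i)) (b := mk xl xr xL xR) i (IHl i).2
      · exact lf_add_of_le_inl (a := -(mk xl xr xL xR)) (b := xR j) j (IHr j).2

theorem neg_le_neg_aux (x y : PGame.{u}) :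
    (-y ≤ -x ↔ x ≤ y) ∧ (-x ≤ -y ↔ y ≤ x) := by
  induction x generalizing y with
  | mk xl xr xL xR IHxl IHxr =>
  induction y with
  | mk yl yr yL yR IHyl IHyr =>
  constructor
  · constructor
    · intro h
      refine le_def.2 ⟨fun j hj => ?_, fun i hi => ?_⟩
      · exact (le_def.1 h).2 j ((IHxl j _).2.2 hj)
      · exact (le_def.1 h).1 i ((IHyr i).2.2 hi)
    · intro h
      refine le_def.2 ⟨fun i hi => ?_, fun j hj => ?_⟩
      · exact (le_def.1 h).2 i ((IHyr i).2.1 hi)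
      · exact (le_def.1 h).1 j ((IHxl j _).2.1 hj)
  · constructor
    · intro h
      refine le_def.2 ⟨fun j hj => ?_, fun i hi => ?_⟩
      · exact (le_def.1 h).2 j ((IHyl j).1.2 hj)
      · exact (le_def.1 h).1 i ((IHxr i _).1.2 hi)
    · intro h
      refine le_def.2 ⟨fun i hi => ?_, fun j hj => ?_⟩
      · exact (le_def.1 h).2 i ((IHxr i _).1.1 hi)
      · exact (le_def.1 h).1 j ((IHyl j).1.1 hj)

theorem add_congr_aux {a b c d : PGame.{u}} (h1 : Equiv a c) (h2 : Equiv b d) :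
    Equiv (a + b) (c + d) := by
  have hl : ∀ x y z : PGame.{u}, y ≤ z → x + y ≤ x + z := fun x y z h =>
    pg_le_trans (add_comm_le x y)
      (pg_le_trans ((add_le_add_right_aux y z x).1 h) (add_comm_le z x))
  exact ⟨pg_le_trans ((add_le_add_right_aux a c b).1 h1.1) (hl c b d h2.1),
    pg_le_trans ((add_le_add_right_aux c a d).1 h1.2) (hl a d b h2.2)⟩

theorem neg_congr_aux {a b : PGame.{u}} (h : Equiv a b) : Equiv (-a) (-b) :=
  ⟨(neg_le_neg_aux a b).2.2 h.2, (neg_le_neg_aux a b).1.2 h.1⟩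

/-- A pre-game is numeric if, hereditarily, every Left option is less than every Right
option. -/
def Numeric : PGame → Prop
  | ⟨_, _, L, R⟩ => (∀ i j, L i < R j) ∧ (∀ i, Numeric (L i)) ∧ ∀ j, Numeric (R j)

/-- The pre-game `powHalf n` is `2⁻ⁿ`. -/
def powHalf : ℕ → PGame
  | 0 => 1
  | n + 1 => ⟨PUnit, PUnit, fun _ => 0, fun _ => powHalf n⟩

end PGame

/-- Games: pre-games modulo equivalence. -/
abbrev Game := Quotient PGame.setoid

namespace Game

open PGame

instance : Add Game.{u} :=
  ⟨Quotient.lift₂ (fun x y => (⟦x + y⟧ : Game)) fun _ _ _ _ h1 h2 =>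
    Quotient.sound (add_congr_aux h1 h2)⟩

instance : Neg Game.{u} :=
  ⟨Quotient.lift (fun x => (⟦-x⟧ : Game)) fun _ _ h => Quotient.sound (neg_congr_aux h)⟩

instance : Zero Game.{u} := ⟨⟦0⟧⟩

instance : One Game.{u} := ⟨⟦1⟧⟩

instance : LE Game.{u} :=
  ⟨Quotient.lift₂ (fun x y => x ≤ y) fun _ _ _ _ h1 h2 =>
    propext ⟨fun h => pg_le_trans (pg_le_trans h1.2 h) h2.1,
      fun h => pg_le_trans (pg_le_trans h1.1 h) h2.2⟩⟩

instance : LT Game.{u} := ⟨fun x y => x ≤ y ∧ ¬ y ≤ x⟩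

instance : PartialOrder Game.{u} where
  le x y := x ≤ y
  lt x y := x < y
  lt_iff_le_not_ge _ _ := Iff.rfl
  le_refl := by rintro ⟨x⟩; exact pg_le_refl x
  le_trans := by
    rintro ⟨x⟩ ⟨y⟩ ⟨z⟩ h1 h2
    exact pg_le_trans (x := x) (y := y) (z := z) h1 h2
  le_antisymm := by
    rintro ⟨x⟩ ⟨y⟩ h1 h2
    exact Quotient.sound ⟨h1, h2⟩

instance : AddCommGroup Game.{u} where
  add := (· + ·)
  zero := 0
  neg := Neg.neg
  add_assoc := by
    rintro ⟨x⟩ ⟨y⟩ ⟨z⟩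
    exact Quotient.sound ⟨(add_assoc_aux x y z).1, (add_assoc_aux x y z).2⟩
  zero_add := by
    rintro ⟨x⟩
    exact Quotient.sound ⟨(zero_add_aux x).1, (zero_add_aux x).2⟩
  add_zero := by
    rintro ⟨x⟩
    exact Quotient.sound ⟨pg_le_trans (add_comm_le x 0) (zero_add_aux x).1,
      pg_le_trans (zero_add_aux x).2 (add_comm_le 0 x)⟩
  add_comm := by
    rintro ⟨x⟩ ⟨y⟩
    exact Quotient.sound ⟨add_comm_le x y, add_comm_le y x⟩
  neg_add_cancel := by
    rintro ⟨x⟩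
    exact Quotient.sound ⟨(neg_add_aux x).1, (neg_add_aux x).2⟩
  nsmul := nsmulRec
  zsmul := zsmulRec

end Game

end SetTheory

open SetTheory PGame

universe u

/-- Ordinal sum `G : H`: players may move in the base `G` (ending all play in the
subordinate) or in the subordinate `H`. -/
def ordinalSum (G : PGame.{u}) : PGame.{u} → PGame.{u}
  | ⟨yl, yr, yL, yR⟩ =>
    ⟨G.LeftMoves ⊕ yl, G.RightMoves ⊕ yr,
     Sum.elim G.moveLeft fun j => ordinalSum G (yL j),
     Sum.elim G.moveRight fun j => ordinalSum G (yR j)⟩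

/-- `G ≜ H`: equivalence modulo domination.  Every Left option of `G` is `≤` some Left
option of `H`, every Left option of `H` is `≤` some Left option of `G`, every Right option
of `G` is `≥` some Right option of `H`, and every Right option of `H` is `≥` some Right
option of `G`. -/
def EquivDom (G H : PGame) : Prop :=
  (∀ i, ∃ j, G.moveLeft i ≤ H.moveLeft j) ∧
  (∀ j, ∃ i, H.moveLeft j ≤ G.moveLeft i) ∧
  (∀ i, ∃ j, H.moveRight j ≤ G.moveRight i) ∧
  (∀ j, ∃ i, G.moveRight i ≤ H.moveRight j)

/-- The ball `⟨a | b⟩`: the game with exactly one Left option `a` and exactly one Right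
option `b`. -/
def ball (a b : PGame.{u}) : PGame.{u} :=
  ⟨PUnit, PUnit, fun _ => a, fun _ => b⟩

/-- The canonical form of a natural number: `0 ≅ ⟨ | ⟩` and `n+1 ≅ ⟨n | ⟩`. -/
def canonNat : ℕ → PGame
  | 0 => 0
  | n + 1 => ⟨PUnit, PEmpty, fun _ => canonNat n, PEmpty.elim⟩

/-- The canonical form of an integer: for `n ≥ 0` it is `canonNat n`, and the canonical
form of a negative integer is the negative of the canonical form of its absolute value. -/
def canonInt (n : ℤ) : PGame :=
  if 0 ≤ n then canonNat n.toNat else -canonNat (-n).toNat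

/-- The game value of the dyadic rational `a / 2 ^ q`. -/
def dyadicVal (a : ℤ) (q : ℕ) : Game :=
  a • (⟦powHalf q⟧ : Game)

/-! Port helpers: the part of the old Mathlib theory of pre-games used below. -/
namespace SetTheory

namespace PGame

/-- `x ⧏ y` : `x` is less or fuzzy with `y`. -/
def LF (x y : PGame.{u}) : Prop := ¬ y ≤ x

infix:50 " ⧏ " => LF

theorem le_iff_forall_lf {x y : PGame.{u}} :
    x ≤ y ↔ (∀ i, x.moveLeft i ⧏ y) ∧ ∀ j, x ⧏ y.moveRight j := le_def

protected theorem not_le {x y : PGame.{u}} : ¬ x ≤ y ↔ y ⧏ x := Iff.rfl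

theorem lf_iff_exists_le {x y : PGame.{u}} :
    x ⧏ y ↔ (∃ i, x ≤ y.moveLeft i) ∨ ∃ j, x.moveRight j ≤ y := not_le_iff

theorem lf_of_lt {x y : PGame.{u}} (h : x < y) : x ⧏ y := (lt_iff_le_not_ge.1 h).2

theorem moveLeft_lf {x : PGame.{u}} (i : x.LeftMoves) : x.moveLeft i ⧏ x :=
  moveLeft_lf_of_le (pg_le_refl x) i

theorem lf_moveRight {x : PGame.{u}} (j : x.RightMoves) : x ⧏ x.moveRight j :=
  lf_moveRight_of_le (pg_le_refl x) j

theorem le_iff_game_le {x y : PGame.{u}} : x ≤ y ↔ (⟦x⟧ : Game) ≤ ⟦y⟧ := Iff.rfl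

theorem lt_iff_game_lt {x y : PGame.{u}} : x < y ↔ (⟦x⟧ : Game) < ⟦y⟧ := Iff.rfl

theorem game_eq {x y : PGame.{u}} (h : x ≈ y) : (⟦x⟧ : Game) = ⟦y⟧ := Quotient.sound h

theorem quot_add (x y : PGame.{u}) : (⟦x + y⟧ : Game) = ⟦x⟧ + ⟦y⟧ := rfl

theorem quot_neg (x : PGame.{u}) : (⟦-x⟧ : Game) = -⟦x⟧ := rfl

end PGame

namespace Game

instance : Preorder Game.{u} := Game.instPartialOrder.toPreorder

instance : IsOrderedAddMonoid Game.{u} where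
  add_le_add_left := by
    rintro ⟨a⟩ ⟨b⟩ h ⟨c⟩
    exact (PGame.add_le_add_right_aux a b c).1 h

instance : AddMonoidWithOne Game.{u} where
  __ := (inferInstance : AddCommGroup Game.{u})
  one := 1
  natCast := Nat.unaryCast
  natCast_zero := rfl
  natCast_succ _ := rfl

end Game

namespace PGame

instance : NatCast PGame.{u} := ⟨Nat.unaryCast⟩

theorem quot_natCast (n : ℕ) : (⟦(n : PGame.{u})⟧ : Game) = (n : Game) := by
  induction n with
  | zero => rfl
  | succ n ih =>
    show (⟦(n : PGame.{u}) + 1⟧ : Game) = _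
    rw [quot_add, ih, Nat.cast_succ]
    rfl

theorem neg_neg_aux (x : PGame.{u}) : -(-x) = x := by
  induction x with
  | mk xl xr xL xR IHl IHr =>
    show mk xl xr (fun i => -(-(xL i))) (fun j => -(-(xR j))) = mk xl xr xL xR
    congr 1
    · funext i
      exact IHl i
    · funext j
      exact IHr j

instance : InvolutiveNeg PGame.{u} where
  neg x := -x
  neg_neg := neg_neg_aux

theorem numeric_def {x : PGame.{u}} : Numeric x ↔ (∀ i j, x.moveLeft i < x.moveRight j) ∧
    (∀ i, Numeric (x.moveLeft i)) ∧ ∀ j, Numeric (x.moveRight j) := by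
  cases x; exact Iff.rfl

theorem Numeric.moveLeft {x : PGame.{u}} (o : Numeric x) (i : x.LeftMoves) :
    Numeric (x.moveLeft i) := (numeric_def.1 o).2.1 i

theorem Numeric.moveRight {x : PGame.{u}} (o : Numeric x) (j : x.RightMoves) :
    Numeric (x.moveRight j) := (numeric_def.1 o).2.2 j

theorem le_of_lf_aux (x : PGame.{u}) :
    ∀ y : PGame.{u}, Numeric x → Numeric y → ¬ y ≤ x → x ≤ y := by
  induction x with
  | mk xl xr xL xR IHl IHr =>
  intro y ox oy h
  by_contra h2
  rcases not_le_iff.1 h with ⟨i, h1⟩ | ⟨j, h1⟩ <;>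
    rcases not_le_iff.1 h2 with ⟨i', h3⟩ | ⟨j', h3⟩
  · exact moveLeft_lf_of_le h3 i
      (IHl i' (y.moveLeft i) (ox.moveLeft i') (oy.moveLeft i) (moveLeft_lf_of_le h1 i'))
  · exact (lt_iff_le_not_ge.1 ((numeric_def.1 oy).1 i j')).2 (pg_le_trans h3 h1)
  · exact (lt_iff_le_not_ge.1 ((numeric_def.1 ox).1 i' j)).2 (pg_le_trans h1 h3)
  · exact lf_moveRight_of_le h3 j
      (IHr j (y.moveRight j') (ox.moveRight j) (oy.moveRight j') (lf_moveRight_of_le h1 j'))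

theorem lf_iff_lt {x y : PGame.{u}} (ox : Numeric x) (oy : Numeric y) : x ⧏ y ↔ x < y :=
  ⟨fun h => lt_iff_le_not_ge.2 ⟨le_of_lf_aux x y ox oy h, h⟩, lf_of_lt⟩

theorem Numeric.moveLeft_lt {x : PGame.{u}} (o : Numeric x) (i : x.LeftMoves) :
    x.moveLeft i < x := (lf_iff_lt (o.moveLeft i) o).1 (moveLeft_lf i)

theorem Numeric.lt_moveRight {x : PGame.{u}} (o : Numeric x) (j : x.RightMoves) :
    x < x.moveRight j := (lf_iff_lt o (o.moveRight j)).1 (lf_moveRight j)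

theorem numeric_add_aux (x : PGame.{u}) :
    ∀ y : PGame.{u}, Numeric x → Numeric y → Numeric (x + y) := by
  induction x with
  | mk xl xr xL xR IHxl IHxr =>
  intro y
  induction y with
  | mk yl yr yL yR IHyl IHyr =>
  intro ox oy
  refine numeric_def.2 ⟨?_, ?_, ?_⟩
  · rintro (i | i) (j | j)
    · have h : (⟦xL i⟧ : Game) + ⟦mk yl yr yL yR⟧ < ⟦xR j⟧ + ⟦mk yl yr yL yR⟧ :=
        add_lt_add_of_lt_of_le (lt_iff_game_lt.1 ((numeric_def.1 ox).1 i j)) le_rfl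
      exact lt_iff_game_lt.2 h
    · have h : (⟦xL i⟧ : Game) + ⟦mk yl yr yL yR⟧ < ⟦mk xl xr xL xR⟧ + ⟦yR j⟧ :=
        add_lt_add (lt_iff_game_lt.1 (ox.moveLeft_lt i)) (lt_iff_game_lt.1 (oy.lt_moveRight j))
      exact lt_iff_game_lt.2 h
    · have h : (⟦mk xl xr xL xR⟧ : Game) + ⟦yL i⟧ < ⟦xR j⟧ + ⟦mk yl yr yL yR⟧ :=
        add_lt_add (lt_iff_game_lt.1 (ox.lt_moveRight j)) (lt_iff_game_lt.1 (oy.moveLeft_lt i))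
      exact lt_iff_game_lt.2 h
    · have h : (⟦mk xl xr xL xR⟧ : Game) + ⟦yL i⟧ < ⟦mk xl xr xL xR⟧ + ⟦yR j⟧ :=
        add_lt_add_of_le_of_lt le_rfl (lt_iff_game_lt.1 ((numeric_def.1 oy).1 i j))
      exact lt_iff_game_lt.2 h
  · rintro (i | i)
    · exact IHxl i _ (ox.moveLeft i) oy
    · exact IHyl i ox (oy.moveLeft i)
  · rintro (j | j)
    · exact IHxr j _ (ox.moveRight j) oy
    · exact IHyr j ox (oy.moveRight j)

theorem Numeric.add {x y : PGame.{u}} (ox : Numeric x) (oy : Numeric y) : Numeric (x + y) :=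
  numeric_add_aux x y ox oy

theorem Numeric.neg {x : PGame.{u}} (o : Numeric x) : Numeric (-x) := by
  induction x with
  | mk xl xr xL xR IHl IHr =>
  refine numeric_def.2 ⟨fun i j => ?_, fun i => IHr i (o.moveRight i),
    fun j => IHl j (o.moveLeft j)⟩
  have h : -(⟦xR i⟧ : Game) < -⟦xL j⟧ := neg_lt_neg (lt_iff_game_lt.1 ((numeric_def.1 o).1 j i))
  exact lt_iff_game_lt.2 h

theorem numeric_zero : Numeric (0 : PGame.{u}) :=
  numeric_def.2 ⟨fun i => PEmpty.elim i, fun i => PEmpty.elim i, fun j => PEmpty.elim j⟩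

theorem numeric_one : Numeric (1 : PGame.{u}) :=
  numeric_def.2 ⟨fun _ j => PEmpty.elim j, fun _ => numeric_zero, fun j => PEmpty.elim j⟩

theorem one_moveLeft (i : (1 : PGame.{u}).LeftMoves) : (1 : PGame.{u}).moveLeft i = 0 := rfl

protected theorem zero_lt_one : (0 : PGame.{u}) < 1 :=
  (lf_iff_lt numeric_zero numeric_one).1 (lf_of_le_moveLeft (i := PUnit.unit) (pg_le_refl 0))

theorem numeric_nat (n : ℕ) : Numeric (n : PGame.{u}) := by
  induction n with
  | zero => exact numeric_zero
  | succ n ih => exact Numeric.add ih numeric_one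

theorem powHalf_moveLeft (n : ℕ) (i : (powHalf.{u} n).LeftMoves) : (powHalf.{u} n).moveLeft i = 0 := by
  cases n <;> rfl

theorem powHalf_succ_moveRight (n : ℕ) (j : (powHalf.{u} (n + 1)).RightMoves) :
    (powHalf.{u} (n + 1)).moveRight j = powHalf n := rfl

theorem numeric_powHalf_aux (n : ℕ) : Numeric (powHalf.{u} n) ∧ 0 < powHalf.{u} n := by
  induction n with
  | zero => exact ⟨numeric_one, PGame.zero_lt_one⟩
  | succ n ih =>
    have h : Numeric (powHalf.{u} (n + 1)) :=
      numeric_def.2 ⟨fun _ _ => ih.2, fun _ => numeric_zero, fun _ => ih.1⟩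
    exact ⟨h, (lf_iff_lt numeric_zero h).1 (lf_of_le_moveLeft (i := PUnit.unit) (pg_le_refl 0))⟩

theorem numeric_powHalf (n : ℕ) : Numeric (powHalf.{u} n) := (numeric_powHalf_aux n).1

theorem powHalf_pos (n : ℕ) : 0 < powHalf.{u} n := (numeric_powHalf_aux n).2

theorem powHalf_le_one (n : ℕ) : powHalf.{u} n ≤ 1 := by
  cases n with
  | zero => exact pg_le_refl 1
  | succ n =>
    exact le_def.2 ⟨fun _ => lf_of_le_moveLeft (i := PUnit.unit) (pg_le_refl 0),
      fun j => PEmpty.elim j⟩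

theorem powHalf_succ_lf_powHalf (n : ℕ) : powHalf.{u} (n + 1) ⧏ powHalf n :=
  lf_of_moveRight_le (j := PUnit.unit) (pg_le_refl (powHalf.{u} n))

theorem powHalf_succ_le_powHalf (n : ℕ) : powHalf (n + 1) ≤ powHalf.{u} n :=
  le_of_lf_aux _ _ (numeric_powHalf _) (numeric_powHalf _) (powHalf_succ_lf_powHalf n)

theorem powHalf_succ_lt_powHalf (n : ℕ) : powHalf (n + 1) < powHalf.{u} n :=
  (lf_iff_lt (numeric_powHalf _) (numeric_powHalf _)).1 (powHalf_succ_lf_powHalf n)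

theorem powHalf_ge_aux (n : ℕ) : powHalf.{u} n ≤ powHalf.{u} (n + 1) + powHalf.{u} (n + 1) := by
  have hP : (0 : Game) < ⟦powHalf (n + 1)⟧ := lt_iff_game_lt.1 (powHalf_pos (n + 1))
  refine le_def.2 ⟨fun i => ?_, fun j => ?_⟩
  · rw [powHalf_moveLeft]
    have h : (0 : Game) < ⟦powHalf.{u} (n + 1)⟧ + ⟦powHalf.{u} (n + 1)⟧ := add_pos hP hP
    exact lf_of_lt (lt_iff_game_lt.2 h)
  · rcases j with j | j
    · have h : (⟦powHalf.{u} n⟧ : Game) < ⟦powHalf.{u} n⟧ + ⟦powHalf (n + 1)⟧ :=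
        lt_add_of_pos_right _ hP
      exact lf_of_lt (lt_iff_game_lt.2 h)
    · have h : (⟦powHalf.{u} n⟧ : Game) < ⟦powHalf (n + 1)⟧ + ⟦powHalf.{u} n⟧ :=
        lt_add_of_pos_left _ hP
      exact lf_of_lt (lt_iff_game_lt.2 h)

theorem powHalf_le_aux (n : ℕ)
    (hR : ∀ j : (powHalf.{u} n).RightMoves,
      ¬ (powHalf.{u} n).moveRight j ≤ powHalf.{u} (n + 1) + powHalf.{u} (n + 1)) :
    powHalf.{u} (n + 1) + powHalf.{u} (n + 1) ≤ powHalf.{u} n := by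
  have hlt : (⟦powHalf (n + 1)⟧ : Game) < ⟦powHalf.{u} n⟧ :=
    lt_iff_game_lt.1 (powHalf_succ_lt_powHalf n)
  refine le_def.2 ⟨fun i => ?_, hR⟩
  rcases i with i | i
  · have h : (⟦(0 : PGame.{u})⟧ : Game) + ⟦powHalf (n + 1)⟧ < ⟦powHalf.{u} n⟧ := by
      rw [show (⟦(0 : PGame.{u})⟧ : Game) = 0 from rfl, zero_add]; exact hlt
    exact lf_of_lt (lt_iff_game_lt.2 h)
  · have h : (⟦powHalf (n + 1)⟧ : Game) + ⟦(0 : PGame.{u})⟧ < ⟦powHalf.{u} n⟧ := by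
      rw [show (⟦(0 : PGame.{u})⟧ : Game) = 0 from rfl, add_zero]; exact hlt
    exact lf_of_lt (lt_iff_game_lt.2 h)

theorem add_powHalf_succ_self_eq_powHalf (n : ℕ) :
    powHalf.{u} (n + 1) + powHalf.{u} (n + 1) ≈ powHalf.{u} n := by
  induction n with
  | zero => exact And.intro (powHalf_le_aux 0 (fun j => PEmpty.elim j)) (powHalf_ge_aux 0)
  | succ m ih =>
    refine And.intro (powHalf_le_aux (m + 1) (fun _ => ?_)) (powHalf_ge_aux (m + 1))
    have h1 : (⟦powHalf (m + 1)⟧ : Game) + ⟦powHalf (m + 2)⟧ ≤ ⟦powHalf m⟧ := by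
      rw [← game_eq ih, quot_add]
      exact add_le_add le_rfl (le_iff_game_le.1 (powHalf_succ_le_powHalf (m + 1)))
    exact lf_of_moveRight_le (j := Sum.inl PUnit.unit) (le_iff_game_le.2 h1)

/-- The birthday of a pre-game. -/
noncomputable def birthday : PGame.{u} → Ordinal.{u}
  | ⟨_, _, xL, xR⟩ => max (Ordinal.lsub.{u, u} fun i => birthday (xL i))
      (Ordinal.lsub.{u, u} fun i => birthday (xR i))

theorem birthday_moveLeft_lt {x : PGame.{u}} (i : x.LeftMoves) :
    (x.moveLeft i).birthday < x.birthday := by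
  cases x; rw [birthday]; exact lt_max_of_lt_left (Ordinal.lt_lsub _ i)

theorem birthday_moveRight_lt {x : PGame.{u}} (j : x.RightMoves) :
    (x.moveRight j).birthday < x.birthday := by
  cases x; rw [birthday]; exact lt_max_of_lt_right (Ordinal.lt_lsub _ j)

/-- Recursion on the moves of a pre-game. -/
noncomputable def moveRecOn {C : PGame.{u} → Sort*} (x : PGame.{u})
    (IH : ∀ y : PGame.{u}, (∀ i, C (y.moveLeft i)) → (∀ j, C (y.moveRight j)) → C y) : C x :=
  x.rec (fun yl yr yL yR IHl IHr => IH (mk yl yr yL yR) IHl IHr)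

def toLeftMovesAdd {x y : PGame.{u}} : x.LeftMoves ⊕ y.LeftMoves ≃ (x + y).LeftMoves :=
  Equiv.cast (by cases x; cases y; rfl)

def toRightMovesAdd {x y : PGame.{u}} : x.RightMoves ⊕ y.RightMoves ≃ (x + y).RightMoves :=
  Equiv.cast (by cases x; cases y; rfl)

theorem add_moveLeft_inl {x y : PGame.{u}} (i : x.LeftMoves) :
    (x + y).moveLeft (toLeftMovesAdd (Sum.inl i)) = x.moveLeft i + y := by
  cases x; cases y; rfl

theorem add_moveLeft_inr {x y : PGame.{u}} (i : y.LeftMoves) :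
    (x + y).moveLeft (toLeftMovesAdd (Sum.inr i)) = x + y.moveLeft i := by
  cases x; cases y; rfl

theorem add_moveRight_inl {x y : PGame.{u}} (i : x.RightMoves) :
    (x + y).moveRight (toRightMovesAdd (Sum.inl i)) = x.moveRight i + y := by
  cases x; cases y; rfl

theorem add_moveRight_inr {x y : PGame.{u}} (i : y.RightMoves) :
    (x + y).moveRight (toRightMovesAdd (Sum.inr i)) = x + y.moveRight i := by
  cases x; cases y; rfl

theorem leftMoves_add_cases {x y : PGame.{u}} {P : (x + y).LeftMoves → Prop}
    (k : (x + y).LeftMoves) (hl : ∀ i, P (toLeftMovesAdd (Sum.inl i)))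
    (hr : ∀ i, P (toLeftMovesAdd (Sum.inr i))) : P k := by
  rw [← toLeftMovesAdd.apply_symm_apply k]
  rcases toLeftMovesAdd.symm k with i | i
  · exact hl i
  · exact hr i

theorem rightMoves_add_cases {x y : PGame.{u}} {P : (x + y).RightMoves → Prop}
    (k : (x + y).RightMoves) (hl : ∀ i, P (toRightMovesAdd (Sum.inl i)))
    (hr : ∀ i, P (toRightMovesAdd (Sum.inr i))) : P k := by
  rw [← toRightMovesAdd.apply_symm_apply k]
  rcases toRightMovesAdd.symm k with i | i
  · exact hl i
  · exact hr i

end PGame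

end SetTheory

namespace GOS

open SetTheory PGame

private lemma glh {x y : PGame} (h1 : ∀ i, (⟦x.moveLeft i⟧ : Game) < ⟦y⟧)
    (h2 : ∀ j, (⟦x⟧ : Game) < ⟦y.moveRight j⟧) : x ≤ y :=
  le_iff_forall_lf.2 ⟨fun i => lf_of_lt (lt_iff_game_lt.2 (h1 i)),
    fun j => lf_of_lt (lt_iff_game_lt.2 (h2 j))⟩

private lemma tot {x y : PGame} (ox : x.Numeric) (oy : y.Numeric) (h : ¬ x ≤ y) : y < x := by
  rw [PGame.not_le] at h
  exact (lf_iff_lt oy ox).1 h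

lemma ball_numeric {a b : PGame} (ha : a.Numeric) (hb : b.Numeric) (hab : a < b) :
    (ball a b).Numeric :=
  numeric_def.2 ⟨fun _ _ => hab, fun _ => ha, fun _ => hb⟩

lemma lt_ball {a b : PGame} (h : (ball a b).Numeric) : a < ball a b :=
  h.moveLeft_lt PUnit.unit

lemma ball_lt {a b : PGame} (h : (ball a b).Numeric) : ball a b < b :=
  h.lt_moveRight PUnit.unit

def Mem (lo hi e : PGame) : Prop := e.Numeric ∧ lo < e ∧ e < hi

def IsMin (lo hi z : PGame) : Prop :=
  Mem lo hi z ∧ ∀ e, Mem lo hi e → z.birthday ≤ e.birthday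

lemma exists_isMin {lo hi : PGame} (h : ∃ e, Mem lo hi e) : ∃ z, IsMin lo hi z := by
  obtain ⟨e0, he0⟩ := h
  obtain ⟨o, ho, hmin⟩ := Ordinal.lt_wf.has_min {o | ∃ e, Mem lo hi e ∧ e.birthday = o}
    ⟨e0.birthday, e0, he0, rfl⟩
  obtain ⟨z, hz, rfl⟩ := ho
  exact ⟨z, hz, fun e he => not_lt.1 (hmin _ ⟨e, he, rfl⟩)⟩

lemma IsMin.left_le {lo hi z : PGame} (hlo : lo.Numeric) (hz : IsMin lo hi z)
    (i : z.LeftMoves) : z.moveLeft i ≤ lo := by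
  by_contra hc
  have hlt : lo < z.moveLeft i := tot (hz.1.1.moveLeft i) hlo hc
  exact absurd (hz.2 _ ⟨hz.1.1.moveLeft i, hlt, (hz.1.1.moveLeft_lt i).trans hz.1.2.2⟩)
    (not_le.2 (birthday_moveLeft_lt i))

lemma IsMin.le_right {lo hi z : PGame} (hhi : hi.Numeric) (hz : IsMin lo hi z)
    (j : z.RightMoves) : hi ≤ z.moveRight j := by
  by_contra hc
  have hlt : z.moveRight j < hi := tot hhi (hz.1.1.moveRight j) hc
  exact absurd (hz.2 _ ⟨hz.1.1.moveRight j, hz.1.2.1.trans (hz.1.1.lt_moveRight j), hlt⟩)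
    (not_le.2 (birthday_moveRight_lt j))

section core

variable {L b c z : PGame}

/-- descend on the z-side -/
lemma descend_z (hL : L.Numeric) (hb : b.Numeric) (hc : c.Numeric)
    (hcl : ∀ i, c.moveLeft i = 0)
    (hx : (ball L b).Numeric)
    (H1 : (⟦ball L b⟧ : Game) + ⟦c⟧ < ⟦b⟧)
    (hz : IsMin (ball L b) b z) :
    ∀ u : PGame, u.Numeric → (⟦u⟧ : Game) ≤ ⟦L⟧ → z ≤ u + c →
      ∃ lam : PGame, lam.Numeric ∧ lam.birthday ≤ u.birthday ∧ (⟦lam⟧ : Game) ≤ ⟦L⟧ ∧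
        (⟦z⟧ : Game) = ⟦lam⟧ + ⟦c⟧ := by
  have hAX : (⟦L⟧ : Game) < ⟦ball L b⟧ := lt_iff_game_lt.1 (lt_ball hx)
  have hXZ : (⟦ball L b⟧ : Game) < ⟦z⟧ := lt_iff_game_lt.1 hz.1.2.1
  intro u
  classical
  induction u using PGame.moveRecOn with
  | _ u IHl _ =>
    intro hu hua hzu
    rcases Classical.em (u + c ≤ z) with hterm | hterm
    · refine ⟨u, hu, le_rfl, hua, ?_⟩
      have : (⟦z⟧ : Game) = ⟦u + c⟧ :=
        le_antisymm (le_iff_game_le.1 hzu) (le_iff_game_le.1 hterm)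
      rwa [quot_add] at this
    · rcases lf_iff_exists_le.1 (PGame.not_le.1 hterm) with ⟨i, hi⟩ | ⟨j, hj⟩
      · revert hi
        refine leftMoves_add_cases (P := fun k => z ≤ (u + c).moveLeft k →
            ∃ lam : PGame, lam.Numeric ∧ lam.birthday ≤ u.birthday ∧ (⟦lam⟧ : Game) ≤ ⟦L⟧ ∧
              (⟦z⟧ : Game) = ⟦lam⟧ + ⟦c⟧)
          i (fun i' => ?_) (fun i' => ?_) <;> intro hi'
        · rw [add_moveLeft_inl] at hi'
          obtain ⟨lam, h1, h2, h3, h4⟩ := IHl i' (hu.moveLeft i')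
            (((lt_iff_game_lt.1 (hu.moveLeft_lt i')).le).trans hua) hi'
          exact ⟨lam, h1, h2.trans (birthday_moveLeft_lt i').le, h3, h4⟩
        · rw [add_moveLeft_inr, hcl] at hi'
          have : (⟦z⟧ : Game) ≤ ⟦u⟧ + ⟦(0 : PGame)⟧ := by
            rw [← quot_add]; exact le_iff_game_le.1 hi'
          rw [show (⟦(0 : PGame)⟧ : Game) = 0 from rfl, add_zero] at this
          exact absurd (this.trans (hua.trans hAX.le)) hXZ.not_ge
      · have h1 : (⟦b⟧ : Game) ≤ ⟦z.moveRight j⟧ := le_iff_game_le.1 (hz.le_right hb j)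
        have h2 : (⟦z.moveRight j⟧ : Game) ≤ ⟦u⟧ + ⟦c⟧ := by
          rw [← quot_add]; exact le_iff_game_le.1 hj
        have h3 : (⟦u⟧ : Game) + ⟦c⟧ < ⟦b⟧ :=
          lt_of_le_of_lt (add_le_add_left (hua.trans hAX.le) _) H1
        exact absurd ((h1.trans h2).trans_lt h3) (lt_irrefl _)

/-- descend on the x-side -/
lemma descend_x (hL : L.Numeric) (hb : b.Numeric) (hc : c.Numeric)
    (hcl : ∀ i, c.moveLeft i = 0)
    (hx : (ball L b).Numeric)
    (H1 : (⟦ball L b⟧ : Game) + ⟦c⟧ < ⟦b⟧) :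
    ∀ u : PGame, u.Numeric → (⟦u⟧ : Game) < ⟦ball L b⟧ → ball L b ≤ u + c →
      ∃ mu : PGame, mu.Numeric ∧ mu.birthday ≤ u.birthday ∧
        (⟦mu⟧ : Game) + ⟦c⟧ = ⟦ball L b⟧ := by
  intro u
  classical
  induction u using PGame.moveRecOn with
  | _ u IHl _ =>
    intro hu hua hxu
    rcases Classical.em (u + c ≤ ball L b) with hterm | hterm
    · refine ⟨u, hu, le_rfl, ?_⟩
      have : (⟦u + c⟧ : Game) = ⟦ball L b⟧ :=
        le_antisymm (le_iff_game_le.1 hterm) (le_iff_game_le.1 hxu)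
      rwa [quot_add] at this
    · rcases lf_iff_exists_le.1 (PGame.not_le.1 hterm) with ⟨i, hi⟩ | ⟨j, hj⟩
      · revert hi
        refine leftMoves_add_cases (P := fun k => ball L b ≤ (u + c).moveLeft k →
            ∃ mu : PGame, mu.Numeric ∧ mu.birthday ≤ u.birthday ∧
              (⟦mu⟧ : Game) + ⟦c⟧ = ⟦ball L b⟧)
          i (fun i' => ?_) (fun i' => ?_) <;> intro hi'
        · rw [add_moveLeft_inl] at hi'
          obtain ⟨mu, h1, h2, h3⟩ := IHl i' (hu.moveLeft i')
            ((lt_iff_game_lt.1 (hu.moveLeft_lt i')).trans hua) hi'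
          exact ⟨mu, h1, h2.trans (birthday_moveLeft_lt i').le, h3⟩
        · rw [add_moveLeft_inr, hcl] at hi'
          have : (⟦ball L b⟧ : Game) ≤ ⟦u⟧ + ⟦(0 : PGame)⟧ := by
            rw [← quot_add]; exact le_iff_game_le.1 hi'
          rw [show (⟦(0 : PGame)⟧ : Game) = 0 from rfl, add_zero] at this
          exact absurd (this.trans_lt hua) (lt_irrefl _)
      · have hj' : (⟦b⟧ : Game) ≤ ⟦u⟧ + ⟦c⟧ := by
          rw [← quot_add]; exact le_iff_game_le.1 hj
        have h3 : (⟦u⟧ : Game) + ⟦c⟧ < ⟦b⟧ :=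
          lt_of_le_of_lt (add_le_add_left hua.le _) H1
        exact absurd (hj'.trans_lt h3) (lt_irrefl _)

/-- the core: from aliveness, extract `μ` with `⟦μ⟧ + ⟦c⟧ = X` and smaller birthday. -/
lemma core (hL : L.Numeric) (hb : b.Numeric) (hc : c.Numeric)
    (hcl : ∀ i, c.moveLeft i = 0)
    (hx : (ball L b).Numeric)
    (H1 : (⟦ball L b⟧ : Game) + ⟦c⟧ < ⟦b⟧)
    (hz : IsMin (ball L b) b z)
    (halive : ¬ (ball L b + c ≤ z)) :
    ∃ mu : PGame, mu.Numeric ∧ mu.birthday < L.birthday ∧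
      (⟦mu⟧ : Game) + ⟦c⟧ = ⟦ball L b⟧ := by
  have hAX : (⟦L⟧ : Game) < ⟦ball L b⟧ := lt_iff_game_lt.1 (lt_ball hx)
  have hXZ : (⟦ball L b⟧ : Game) < ⟦z⟧ := lt_iff_game_lt.1 hz.1.2.1
  have hZB : (⟦z⟧ : Game) < ⟦b⟧ := lt_iff_game_lt.1 hz.1.2.2
  have hzL : z ≤ L + c := by
    rcases lf_iff_exists_le.1 (PGame.not_le.1 halive) with ⟨i, hi⟩ | ⟨j, hj⟩
    · revert hi
      refine leftMoves_add_cases (P := fun k => z ≤ (ball L b + c).moveLeft k → z ≤ L + c)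
        i (fun i' => ?_) (fun i' => ?_) <;> intro hi'
      · rw [add_moveLeft_inl] at hi'
        exact hi'
      · rw [add_moveLeft_inr, hcl] at hi'
        have : (⟦z⟧ : Game) ≤ ⟦ball L b⟧ + ⟦(0 : PGame)⟧ := by
          rw [← quot_add]; exact le_iff_game_le.1 hi'
        rw [show (⟦(0 : PGame)⟧ : Game) = 0 from rfl, add_zero] at this
        exact absurd this hXZ.not_ge
    · have h1 : (⟦b⟧ : Game) ≤ ⟦z.moveRight j⟧ := le_iff_game_le.1 (hz.le_right hb j)
      have h2 : (⟦z.moveRight j⟧ : Game) ≤ ⟦ball L b⟧ + ⟦c⟧ := by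
        rw [← quot_add]; exact le_iff_game_le.1 hj
      exact absurd ((h1.trans h2).trans_lt H1) (lt_irrefl _)
  obtain ⟨lam, hlam, hlamb, hlamA, hlamz⟩ :=
    descend_z hL hb hc hcl hx H1 hz L hL le_rfl hzL
  have hxlf : ball L b ⧏ lam + c := by
    apply lf_of_lt
    apply lt_iff_game_lt.2
    rw [quot_add, ← hlamz]
    exact hXZ
  rcases lf_iff_exists_le.1 hxlf with ⟨i, hi⟩ | ⟨j, hj⟩
  · revert hi
    refine leftMoves_add_cases (P := fun k => ball L b ≤ (lam + c).moveLeft k →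
        ∃ mu : PGame, mu.Numeric ∧ mu.birthday < L.birthday ∧
          (⟦mu⟧ : Game) + ⟦c⟧ = ⟦ball L b⟧)
      i (fun i' => ?_) (fun i' => ?_) <;> intro hi'
    · rw [add_moveLeft_inl] at hi'
      obtain ⟨mu, h1, h2, h3⟩ := descend_x hL hb hc hcl hx H1 (lam.moveLeft i')
        (hlam.moveLeft i')
        (((lt_iff_game_lt.1 (hlam.moveLeft_lt i')).trans_le hlamA).trans hAX) hi'
      exact ⟨mu, h1, h2.trans_lt ((birthday_moveLeft_lt i').trans_le hlamb), h3⟩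
    · rw [add_moveLeft_inr, hcl] at hi'
      have : (⟦ball L b⟧ : Game) ≤ ⟦lam⟧ + ⟦(0 : PGame)⟧ := by
        rw [← quot_add]; exact le_iff_game_le.1 hi'
      rw [show (⟦(0 : PGame)⟧ : Game) = 0 from rfl, add_zero] at this
      exact absurd (this.trans hlamA) hAX.not_ge
  · have hj' : (⟦b⟧ : Game) ≤ ⟦lam⟧ + ⟦c⟧ := by
      rw [← quot_add]; exact le_iff_game_le.1 hj
    rw [← hlamz] at hj'
    exact absurd (hj'.trans_lt hZB) (lt_irrefl _)

end core

/-- the easy (≤) direction -/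
lemma z_le {L b c z : PGame} (hb : b.Numeric) (hx : (ball L b).Numeric)
    (hq0 : (0 : Game) < ⟦c⟧)
    (Hc3 : ∀ j, (⟦b⟧ : Game) ≤ ⟦ball L b⟧ + ⟦c.moveRight j⟧)
    (hz : IsMin (ball L b) b z) : (⟦z⟧ : Game) ≤ ⟦ball L b⟧ + ⟦c⟧ := by
  have hZB : (⟦z⟧ : Game) < ⟦b⟧ := lt_iff_game_lt.1 hz.1.2.2
  have h : z ≤ ball L b + c := by
    refine glh (fun i => ?_) (fun j => ?_)
    · have h1 : (⟦z.moveLeft i⟧ : Game) ≤ ⟦ball L b⟧ := le_iff_game_le.1 (hz.left_le hx i)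
      calc (⟦z.moveLeft i⟧ : Game) ≤ ⟦ball L b⟧ := h1
        _ < ⟦ball L b⟧ + ⟦c⟧ := lt_add_of_pos_right _ hq0
        _ = ⟦ball L b + c⟧ := (quot_add _ _).symm
    · refine rightMoves_add_cases (P := fun k => (⟦z⟧ : Game) < ⟦(ball L b + c).moveRight k⟧)
        j (fun j' => ?_) (fun j' => ?_)
      · show (⟦z⟧ : Game) < ⟦(ball L b + c).moveRight (toRightMovesAdd (Sum.inl j'))⟧
        rw [add_moveRight_inl]
        show (⟦z⟧ : Game) < ⟦b + c⟧
        rw [quot_add]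
        exact hZB.trans_le (le_add_of_nonneg_right hq0.le)
      · show (⟦z⟧ : Game) < ⟦(ball L b + c).moveRight (toRightMovesAdd (Sum.inr j'))⟧
        rw [add_moveRight_inr]
        show (⟦z⟧ : Game) < ⟦ball L b + c.moveRight j'⟧
        rw [quot_add]
        exact hZB.trans_le (Hc3 j')
  have := le_iff_game_le.1 h
  rwa [quot_add] at this

/-- the main step : endgame via `core` plus a provided inner bound -/
lemma step_main {L b c z : PGame} (hL : L.Numeric) (hb : b.Numeric) (hc : c.Numeric)
    (hcl : ∀ i, c.moveLeft i = 0) (hq0 : (0 : Game) < ⟦c⟧)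
    (hx : (ball L b).Numeric)
    (H1 : (⟦ball L b⟧ : Game) + ⟦c⟧ < ⟦b⟧)
    (hz : IsMin (ball L b) b z)
    (inner : ∀ mu : PGame, mu.Numeric → mu.birthday < L.birthday →
      (⟦mu⟧ : Game) + ⟦c⟧ = ⟦ball L b⟧ → mu < b →
      ∀ z', IsMin (ball mu b) b z' → (⟦ball mu b⟧ : Game) + ⟦c⟧ ≤ ⟦z'⟧) :
    (⟦ball L b⟧ : Game) + ⟦c⟧ ≤ ⟦z⟧ := by
  have hXZ : (⟦ball L b⟧ : Game) < ⟦z⟧ := lt_iff_game_lt.1 hz.1.2.1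
  have hZB : (⟦z⟧ : Game) < ⟦b⟧ := lt_iff_game_lt.1 hz.1.2.2
  by_contra hcon
  have halive : ¬ (ball L b + c ≤ z) := fun hh => hcon (by
    have := le_iff_game_le.1 hh
    rwa [quot_add] at this)
  have halive' : (⟦z⟧ : Game) < ⟦ball L b⟧ + ⟦c⟧ := by
    have := lt_iff_game_lt.1 (tot (hx.add hc) hz.1.1 halive)
    rwa [quot_add] at this
  obtain ⟨mu, hmu, hmub, hmuv⟩ := core hL hb hc hcl hx H1 hz halive
  have hmuX : (⟦mu⟧ : Game) < ⟦ball L b⟧ := by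
    rw [← hmuv]; exact lt_add_of_pos_right _ hq0
  have hmultb : mu < b := lt_iff_game_lt.2 (hmuX.trans (lt_iff_game_lt.1 (ball_lt hx)))
  have hx' : (ball mu b).Numeric := ball_numeric hmu hb hmultb
  have hX'l : (⟦mu⟧ : Game) < ⟦ball mu b⟧ := lt_iff_game_lt.1 (lt_ball hx')
  have hX'B : (⟦ball mu b⟧ : Game) < ⟦b⟧ := lt_iff_game_lt.1 (ball_lt hx')
  have hX'ub : (⟦ball mu b⟧ : Game) ≤ ⟦ball L b⟧ :=
    le_iff_game_le.1 (glh (fun _ => hmuX) (fun _ => hX'B))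
  have hmem : Mem (ball mu b) b (ball (ball mu b) b) := by
    have h3 : (ball (ball mu b) b).Numeric := ball_numeric hx' hb (ball_lt hx')
    exact ⟨h3, lt_ball h3, ball_lt h3⟩
  obtain ⟨z', hz'⟩ := exists_isMin ⟨_, hmem⟩
  have hlow := inner mu hmu hmub hmuv hmultb z' hz'
  have hXz' : (⟦ball L b⟧ : Game) < ⟦z'⟧ :=
    calc (⟦ball L b⟧ : Game) = ⟦mu⟧ + ⟦c⟧ := hmuv.symm
      _ < ⟦ball mu b⟧ + ⟦c⟧ := add_lt_add_left hX'l _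
      _ ≤ ⟦z'⟧ := hlow
  have hz'B : (⟦z'⟧ : Game) < ⟦b⟧ := lt_iff_game_lt.1 hz'.1.2.2
  have h1 : z' ≤ z := by
    refine glh (fun i => ?_) (fun j => ?_)
    · exact lt_of_le_of_lt ((le_iff_game_le.1 (hz'.left_le hx' i)).trans hX'ub) hXZ
    · exact hz'B.trans_le (le_iff_game_le.1 (hz.le_right hb j))
  have h2 : z ≤ z' := by
    refine glh (fun i => ?_) (fun j => ?_)
    · exact lt_of_le_of_lt (le_iff_game_le.1 (hz.left_le hx i)) hXz'
    · exact hZB.trans_le (le_iff_game_le.1 (hz'.le_right hb j))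
  have hZeq : (⟦z'⟧ : Game) = ⟦z⟧ := le_antisymm (le_iff_game_le.1 h1) (le_iff_game_le.1 h2)
  have hX'X : (⟦ball mu b⟧ : Game) < ⟦ball L b⟧ := by
    have h4 : (⟦ball mu b⟧ : Game) + ⟦c⟧ < ⟦ball L b⟧ + ⟦c⟧ := by
      calc (⟦ball mu b⟧ : Game) + ⟦c⟧ ≤ ⟦z'⟧ := hlow
        _ = ⟦z⟧ := hZeq
        _ < ⟦ball L b⟧ + ⟦c⟧ := halive'
    exact lt_of_add_lt_add_right h4
  have hfin : z' ≤ ball L b := by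
    refine glh (fun i => ?_) (fun j => ?_)
    · exact lt_of_le_of_lt (le_iff_game_le.1 (hz'.left_le hx' i)) hX'X
    · exact hz'B
  have h5 : (⟦z'⟧ : Game) ≤ ⟦ball L b⟧ := le_iff_game_le.1 hfin
  rw [hZeq] at h5
  exact absurd h5 hXZ.not_ge

lemma game_zero_le_one : (0 : Game) ≤ 1 := le_iff_game_le.1 PGame.zero_lt_one.le

lemma gnat_nonneg : ∀ n : ℕ, (0 : Game) ≤ (n : Game)
  | 0 => by rw [Nat.cast_zero]
  | n + 1 => by
    rw [Nat.cast_succ]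
    exact add_nonneg (gnat_nonneg n) game_zero_le_one

lemma gnat_mono {m n : ℕ} (h : m ≤ n) : (m : Game) ≤ (n : Game) := by
  induction n with
  | zero => rw [Nat.le_zero.1 h]
  | succ n ih =>
    rcases Nat.lt_or_ge m (n + 1) with h' | h'
    · rw [Nat.cast_succ]
      exact (ih (Nat.lt_succ_iff.1 h')).trans (le_add_of_nonneg_right game_zero_le_one)
    · rw [le_antisymm h h']

lemma g_one_le {n : ℕ} (h : 1 ≤ n) : (1 : Game) ≤ (n : Game) := by
  have := gnat_mono h
  rwa [Nat.cast_one] at this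

/-- the integer-scale main lemma -/
lemma MLZ {b : PGame} (hb : b.Numeric) :
    ∀ (o : Ordinal) (L : PGame), L.birthday = o → L.Numeric → L < b →
      ∀ n : ℕ, 0 < n →
        (⟦ball L b⟧ : Game) + (n : Game) < ⟦b⟧ →
        (⟦b⟧ : Game) ≤ ⟦ball L b⟧ + (n : Game) + (n : Game) →
        ∀ z, IsMin (ball L b) b z → (⟦ball L b⟧ : Game) + 1 ≤ ⟦z⟧ := by
  intro o
  induction o using Ordinal.induction with
  | h o IH =>
  rintro L rfl hL hLb n hn H1 H2 z hz
  have hx : (ball L b).Numeric := ball_numeric hL hb hLb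
  have hq1 : (⟦(1 : PGame)⟧ : Game) = 1 := rfl
  have hq0 : (0 : Game) < ⟦(1 : PGame)⟧ := lt_iff_game_lt.1 PGame.zero_lt_one
  have H1' : (⟦ball L b⟧ : Game) + ⟦(1 : PGame)⟧ < ⟦b⟧ := by
    rw [hq1]
    exact lt_of_le_of_lt (add_le_add_right (g_one_le hn) _) H1
  have key := step_main hL hb numeric_one (fun i => one_moveLeft i) hq0 hx H1' hz ?_
  · rwa [hq1] at key
  intro mu hmu hmub hmuv hmultb z' hz'
  rw [hq1] at hmuv
  have hx' : (ball mu b).Numeric := ball_numeric hmu hb hmultb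
  have hmuX : (⟦mu⟧ : Game) < ⟦ball L b⟧ := by
    rw [← hmuv]; exact lt_add_of_pos_right _ (lt_iff_game_lt.1 PGame.zero_lt_one)
  have hX'B : (⟦ball mu b⟧ : Game) < ⟦b⟧ := lt_iff_game_lt.1 (ball_lt hx')
  have hX'X : (⟦ball mu b⟧ : Game) ≤ ⟦ball L b⟧ :=
    le_iff_game_le.1 (glh (fun _ => hmuX) (fun _ => hX'B))
  have hmuX' : (⟦mu⟧ : Game) < ⟦ball mu b⟧ := lt_iff_game_lt.1 (lt_ball hx')
  have H1'' : (⟦ball mu b⟧ : Game) + (n : Game) < ⟦b⟧ :=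
    lt_of_le_of_lt (add_le_add_left hX'X _) H1
  have goal_of : (⟦ball mu b⟧ : Game) + 1 ≤ ⟦z'⟧ →
      (⟦ball mu b⟧ : Game) + ⟦(1 : PGame)⟧ ≤ ⟦z'⟧ := by
    rw [hq1]; exact id
  rcases Classical.em (b ≤ ball mu b + ((n : PGame) + (n : PGame))) with hcase | hcase
  · refine goal_of (IH mu.birthday hmub mu rfl hmu hmultb n hn H1'' ?_ z' hz')
    have := le_iff_game_le.1 hcase
    rw [quot_add, quot_add, quot_natCast] at this
    rwa [add_assoc]
  · have hnum : (ball mu b + ((n : PGame) + (n : PGame))).Numeric :=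
      hx'.add ((numeric_nat n).add (numeric_nat n))
    have hlt : (⟦ball mu b⟧ : Game) + (n : Game) + (n : Game) < ⟦b⟧ := by
      have := lt_iff_game_lt.1 (tot hb hnum hcase)
      rw [quot_add, quot_add, quot_natCast] at this
      rwa [add_assoc]
    refine goal_of (IH mu.birthday hmub mu rfl hmu hmultb (n + 1) (Nat.succ_pos n) ?_ ?_ z' hz')
    · rw [Nat.cast_succ]
      calc (⟦ball mu b⟧ : Game) + ((n : Game) + 1)
          ≤ ⟦ball mu b⟧ + ((n : Game) + (n : Game)) :=
            add_le_add_right (add_le_add_right (g_one_le hn) _) _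
        _ = ⟦ball mu b⟧ + (n : Game) + (n : Game) := by rw [add_assoc]
        _ < ⟦b⟧ := hlt
    · rw [Nat.cast_succ]
      calc (⟦b⟧ : Game) ≤ ⟦ball L b⟧ + (n : Game) + (n : Game) := H2
        _ = (⟦mu⟧ + 1) + (n : Game) + (n : Game) := by rw [hmuv]
        _ ≤ (⟦ball mu b⟧ + 1) + (n : Game) + (n : Game) :=
            add_le_add_left (add_le_add_left (add_le_add_left hmuX'.le _) _) _
        _ ≤ ⟦ball mu b⟧ + ((n : Game) + 1) + ((n : Game) + 1) := by
            have h01 : (0 : Game) ≤ 1 := game_zero_le_one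
            have heq : (⟦ball mu b⟧ + 1) + (n : Game) + (n : Game) =
                ⟦ball mu b⟧ + ((n : Game) + 1) + (n : Game) := by abel
            rw [heq]
            exact add_le_add_right (le_add_of_nonneg_right h01) _

/-- the fractional-scale main lemma -/
lemma MLF {b : PGame} (hb : b.Numeric) :
    ∀ (o : Ordinal) (L : PGame), L.birthday = o → L.Numeric → L < b →
      ∀ m : ℕ,
        (⟦ball L b⟧ : Game) + ⟦powHalf (m + 1)⟧ < ⟦b⟧ →
        (⟦b⟧ : Game) ≤ ⟦ball L b⟧ + ⟦powHalf m⟧ →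
        ∀ z, IsMin (ball L b) b z →
          (⟦ball L b⟧ : Game) + ⟦powHalf (m + 1)⟧ ≤ ⟦z⟧ := by
  intro o
  induction o using Ordinal.induction with
  | h o IH =>
  rintro L rfl hL hLb m H1 H2 z hz
  have hx : (ball L b).Numeric := ball_numeric hL hb hLb
  have hq0 : (0 : Game) < ⟦powHalf (m + 1)⟧ := lt_iff_game_lt.1 (powHalf_pos (m + 1))
  refine step_main hL hb (numeric_powHalf (m + 1)) (powHalf_moveLeft (m + 1)) hq0 hx H1 hz ?_
  intro mu hmu hmub hmuv hmultb z' hz'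
  have hx' : (ball mu b).Numeric := ball_numeric hmu hb hmultb
  have hmuX : (⟦mu⟧ : Game) < ⟦ball L b⟧ := by
    rw [← hmuv]; exact lt_add_of_pos_right _ hq0
  have hX'B : (⟦ball mu b⟧ : Game) < ⟦b⟧ := lt_iff_game_lt.1 (ball_lt hx')
  have hX'X : (⟦ball mu b⟧ : Game) ≤ ⟦ball L b⟧ :=
    le_iff_game_le.1 (glh (fun _ => hmuX) (fun _ => hX'B))
  have hmuX' : (⟦mu⟧ : Game) < ⟦ball mu b⟧ := lt_iff_game_lt.1 (lt_ball hx')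
  have H1'' : (⟦ball mu b⟧ : Game) + ⟦powHalf (m + 1)⟧ < ⟦b⟧ :=
    lt_of_le_of_lt (add_le_add_left hX'X _) H1
  rcases Classical.em (b ≤ ball mu b + powHalf m) with hcase | hcase
  · refine IH mu.birthday hmub mu rfl hmu hmultb m H1'' ?_ z' hz'
    have := le_iff_game_le.1 hcase
    rwa [quot_add] at this
  · have hnum : (ball mu b + powHalf m).Numeric := hx'.add (numeric_powHalf m)
    have hlt : (⟦ball mu b⟧ : Game) + ⟦powHalf m⟧ < ⟦b⟧ := by
      have := lt_iff_game_lt.1 (tot hb hnum hcase)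
      rwa [quot_add] at this
    cases m with
    | zero =>
      have h1 := MLZ hb mu.birthday mu rfl hmu hmultb 1 one_pos ?_ ?_ z' hz'
      · calc (⟦ball mu b⟧ : Game) + ⟦powHalf 1⟧ ≤ ⟦ball mu b⟧ + 1 :=
              add_le_add_right (le_iff_game_le.1 (powHalf_le_one 1)) _
          _ ≤ ⟦z'⟧ := h1
      · rw [Nat.cast_one]
        have h2 : (⟦powHalf 0⟧ : Game) = 1 := rfl
        rwa [h2] at hlt
      · rw [Nat.cast_one]
        calc (⟦b⟧ : Game) ≤ ⟦ball L b⟧ + ⟦powHalf 0⟧ := H2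
          _ = ⟦ball L b⟧ + 1 := by rfl
          _ = (⟦mu⟧ + ⟦powHalf 1⟧) + 1 := by rw [hmuv]
          _ ≤ (⟦ball mu b⟧ + 1) + 1 :=
              add_le_add_left
                (add_le_add hmuX'.le (le_iff_game_le.1 (powHalf_le_one 1))) _
    | succ m' =>
      have hhalf : (⟦powHalf (m' + 1)⟧ : Game) + ⟦powHalf (m' + 1)⟧ = ⟦powHalf m'⟧ := by
        have := game_eq (add_powHalf_succ_self_eq_powHalf m')
        rwa [quot_add] at this
      have hmono : (⟦powHalf (m' + 2)⟧ : Game) ≤ ⟦powHalf (m' + 1)⟧ :=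
        le_iff_game_le.1 (powHalf_succ_le_powHalf (m' + 1))
      have h1 := IH mu.birthday hmub mu rfl hmu hmultb m' ?_ ?_ z' hz'
      · calc (⟦ball mu b⟧ : Game) + ⟦powHalf (m' + 2)⟧
            ≤ ⟦ball mu b⟧ + ⟦powHalf (m' + 1)⟧ := add_le_add_right hmono _
          _ ≤ ⟦z'⟧ := h1
      · exact hlt
      · calc (⟦b⟧ : Game) ≤ ⟦ball L b⟧ + ⟦powHalf (m' + 1)⟧ := H2
          _ = (⟦mu⟧ + ⟦powHalf (m' + 2)⟧) + ⟦powHalf (m' + 1)⟧ := by rw [hmuv]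
          _ ≤ (⟦ball mu b⟧ + ⟦powHalf (m' + 1)⟧) + ⟦powHalf (m' + 1)⟧ :=
              add_le_add_left (add_le_add hmuX'.le hmono) _
          _ = ⟦ball mu b⟧ + (⟦powHalf (m' + 1)⟧ + ⟦powHalf (m' + 1)⟧) := by abel
          _ = ⟦ball mu b⟧ + ⟦powHalf m'⟧ := by rw [hhalf]

end GOS

namespace GOS

open SetTheory PGame

lemma main_pos {a b : PGame.{u}} (ha : a.Numeric) (hb : b.Numeric)
    (hG : (ball a b).Numeric) (K : ℕ) (α : ℕ → ℕ)
    (hb1 : (⟦b⟧ : Game) - ⟦ball a b⟧ ≤ 1)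
    (hα : ∀ i, i < K → 0 < α i ∧
      (⟦powHalf (α i)⟧ : Game) <
        ⟦b⟧ - ⟦ball a b⟧ - ∑ j ∈ Finset.range i, (⟦powHalf (α j)⟧ : Game) ∧
      ∀ t : ℕ, 0 < t →
        (⟦powHalf t⟧ : Game) <
          ⟦b⟧ - ⟦ball a b⟧ - ∑ j ∈ Finset.range i, (⟦powHalf (α j)⟧ : Game) →
        α i ≤ t) :
    ∀ k, k ≤ K →
      ((⟦ordinalSum (ball a b) (canonNat k)⟧ : Game) =
        ⟦ball a b⟧ + ∑ i ∈ Finset.range k, (⟦powHalf (α i)⟧ : Game)) ∧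
      (ordinalSum (ball a b) (canonNat k)).Numeric ∧
      ∃ L : PGame, L.Numeric ∧ L < b ∧
        (⟦ball L b⟧ : Game) = ⟦ball a b⟧ + ∑ i ∈ Finset.range k, (⟦powHalf (α i)⟧ : Game) := by
  have hab : a < b := (lt_ball hG).trans (ball_lt hG)
  have hAX : (⟦a⟧ : Game) < ⟦ball a b⟧ := lt_iff_game_lt.1 (lt_ball hG)
  have hXB : (⟦ball a b⟧ : Game) < ⟦b⟧ := lt_iff_game_lt.1 (ball_lt hG)
  intro k
  induction k with
  | zero =>
    intro _
    rw [Finset.sum_range_zero, add_zero]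
    have e1 : ordinalSum (ball a b) (canonNat 0) ≤ ball a b := by
      refine le_iff_forall_lf.2 ⟨fun i => ?_, fun j => ?_⟩
      · rcases i with u' | e'
        · exact moveLeft_lf (x := ball a b) PUnit.unit
        · exact e'.elim
      · exact lf_of_moveRight_le (j := Sum.inl PUnit.unit) (le_refl b)
    have e2 : ball a b ≤ ordinalSum (ball a b) (canonNat 0) := by
      refine le_iff_forall_lf.2 ⟨fun i => ?_, fun j => ?_⟩
      · exact lf_of_le_moveLeft (i := Sum.inl PUnit.unit) (le_refl a)
      · rcases j with u' | e'
        · exact lf_moveRight (x := ball a b) PUnit.unit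
        · exact e'.elim
    have hval : (⟦ordinalSum (ball a b) (canonNat 0)⟧ : Game) = ⟦ball a b⟧ :=
      le_antisymm (le_iff_game_le.1 e1) (le_iff_game_le.1 e2)
    refine ⟨hval, ?_, a, ha, hab, rfl⟩
    refine numeric_def.2 ⟨fun i j => ?_, fun i => ?_, fun j => ?_⟩
    · rcases i with u1 | e1'
      · rcases j with u2 | e2'
        · exact hab
        · exact e2'.elim
      · exact e1'.elim
    · rcases i with u1 | e1'
      · exact ha
      · exact e1'.elim
    · rcases j with u2 | e2'
      · exact hb
      · exact e2'.elim
  | succ k IH =>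
    intro hk1
    have hkK : k < K := lt_of_lt_of_le (Nat.lt_succ_self k) hk1
    obtain ⟨hgv, hgnum, L, hL, hLb, hLv⟩ := IH hkK.le
    obtain ⟨hα1, hα2, hα3⟩ := hα k hkK
    obtain ⟨m, hm⟩ : ∃ m, α k = m + 1 := ⟨α k - 1, (Nat.succ_pred_eq_of_pos hα1).symm⟩
    have hx : (ball L b).Numeric := ball_numeric hL hb hLb
    have hS0 : (0 : Game) ≤ ∑ i ∈ Finset.range k, (⟦powHalf (α i)⟧ : Game) :=
      Finset.sum_nonneg fun i _ => (lt_iff_game_lt.1 (powHalf_pos (α i))).le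
    have H1 : (⟦ball L b⟧ : Game) + ⟦powHalf (α k)⟧ < ⟦b⟧ := by
      rw [hLv]
      have h2 := hα2
      rw [lt_sub_iff_add_lt, lt_sub_iff_add_lt] at h2
      calc (⟦ball a b⟧ : Game) + ∑ i ∈ Finset.range k, (⟦powHalf (α i)⟧ : Game)
            + ⟦powHalf (α k)⟧
          = ⟦powHalf (α k)⟧ + ∑ i ∈ Finset.range k, (⟦powHalf (α i)⟧ : Game)
            + ⟦ball a b⟧ := by abel
        _ < ⟦b⟧ := h2
    have H2 : (⟦b⟧ : Game) ≤ ⟦ball L b⟧ + ⟦powHalf m⟧ := by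
      rcases Nat.eq_zero_or_pos m with h0 | hpos
      · subst h0
        rw [hLv, show (⟦powHalf 0⟧ : Game) = 1 from rfl]
        have hB1 : (⟦b⟧ : Game) ≤ ⟦ball a b⟧ + 1 := by
          have := hb1
          rwa [sub_le_iff_le_add, add_comm] at this
        calc (⟦b⟧ : Game) ≤ ⟦ball a b⟧ + 1 := hB1
          _ ≤ ⟦ball a b⟧ + ∑ i ∈ Finset.range k, (⟦powHalf (α i)⟧ : Game) + 1 := by
              have : (⟦ball a b⟧ : Game) + 1 =
                  ⟦ball a b⟧ + 0 + 1 := by rw [add_zero]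
              rw [this]
              exact add_le_add_left (add_le_add_right hS0 _) _
      · rcases Classical.em (b ≤ ball L b + powHalf m) with hcc | hcc
        · have := le_iff_game_le.1 hcc
          rwa [quot_add] at this
        · exfalso
          have hnum : (ball L b + powHalf m).Numeric := hx.add (numeric_powHalf m)
          have hlt : (⟦ball L b⟧ : Game) + ⟦powHalf m⟧ < ⟦b⟧ := by
            have := lt_iff_game_lt.1 (tot hb hnum hcc)
            rwa [quot_add] at this
          have hmin : α k ≤ m := by
            refine hα3 m hpos ?_
            rw [sub_sub, lt_sub_iff_add_lt]
            rw [hLv] at hlt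
            calc (⟦powHalf m⟧ : Game) +
                  (⟦ball a b⟧ + ∑ j ∈ Finset.range k, (⟦powHalf (α j)⟧ : Game))
                = ⟦ball a b⟧ + ∑ j ∈ Finset.range k, (⟦powHalf (α j)⟧ : Game)
                  + ⟦powHalf m⟧ := by abel
              _ < ⟦b⟧ := hlt
          omega
    have hmem : Mem (ball L b) b (ball (ball L b) b) := by
      have h3 : (ball (ball L b) b).Numeric := ball_numeric hx hb (ball_lt hx)
      exact ⟨h3, lt_ball h3, ball_lt h3⟩
    obtain ⟨z, hz⟩ := exists_isMin ⟨_, hmem⟩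
    have hq0 : (0 : Game) < ⟦powHalf (α k)⟧ := lt_iff_game_lt.1 (powHalf_pos (α k))
    -- lower bound
    have hlow : (⟦ball L b⟧ : Game) + ⟦powHalf (α k)⟧ ≤ ⟦z⟧ := by
      rw [hm]
      rw [hm] at H1
      exact MLF hb L.birthday L rfl hL hLb m H1 H2 z hz
    -- upper bound
    have hupp : (⟦z⟧ : Game) ≤ ⟦ball L b⟧ + ⟦powHalf (α k)⟧ := by
      refine z_le hb hx hq0 ?_ hz
      rw [hm]
      intro j
      rw [powHalf_succ_moveRight]
      exact H2
    have hzv : (⟦z⟧ : Game) = ⟦ball a b⟧ +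
        ∑ i ∈ Finset.range (k + 1), (⟦powHalf (α i)⟧ : Game) := by
      rw [Finset.sum_range_succ, ← add_assoc, ← hLv]
      exact le_antisymm hupp hlow
    have hXz : (⟦ball L b⟧ : Game) < ⟦z⟧ := lt_iff_game_lt.1 hz.1.2.1
    have hzB : (⟦z⟧ : Game) < ⟦b⟧ := lt_iff_game_lt.1 hz.1.2.2
    -- value of g k is below z, and g k < b
    have hgz : (⟦ordinalSum (ball a b) (canonNat k)⟧ : Game) < ⟦z⟧ := by
      rw [hgv, ← hLv]; exact hXz
    have hgkb : ordinalSum (ball a b) (canonNat k) < b := by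
      apply lt_iff_game_lt.2
      rw [hgv, ← hLv]
      exact lt_of_lt_of_le (lt_add_of_pos_right _ hq0) (hlow.trans hzB.le)
    -- g (k+1) ≈ z
    have e1 : ordinalSum (ball a b) (canonNat (k + 1)) ≤ z := by
      refine le_iff_forall_lf.2 ⟨fun i => ?_, fun j => ?_⟩
      · rcases i with u' | u'
        · show a ⧏ z
          apply lf_of_lt
          apply lt_iff_game_lt.2
          calc (⟦a⟧ : Game) < ⟦ball a b⟧ := hAX
            _ ≤ ⟦ball a b⟧ + ∑ i ∈ Finset.range k, (⟦powHalf (α i)⟧ : Game) :=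
                le_add_of_nonneg_right hS0
            _ = ⟦ball L b⟧ := hLv.symm
            _ < ⟦z⟧ := hXz
        · show ordinalSum (ball a b) (canonNat k) ⧏ z
          exact lf_of_lt (lt_iff_game_lt.2 hgz)
      · exact lf_of_moveRight_le (j := Sum.inl PUnit.unit) (hz.le_right hb j)
    have e2 : z ≤ ordinalSum (ball a b) (canonNat (k + 1)) := by
      refine le_iff_forall_lf.2 ⟨fun i => ?_, fun j => ?_⟩
      · refine lf_of_le_moveLeft (i := Sum.inr PUnit.unit) ?_
        show z.moveLeft i ≤ ordinalSum (ball a b) (canonNat k)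
        refine (hz.left_le hx i).trans (le_iff_game_le.2 ?_)
        rw [hLv, hgv]
      · rcases j with u' | e'
        · show z ⧏ b
          exact lf_of_lt (lt_iff_game_lt.2 hzB)
        · exact e'.elim
    have hval : (⟦ordinalSum (ball a b) (canonNat (k + 1))⟧ : Game) = ⟦ball a b⟧ +
        ∑ i ∈ Finset.range (k + 1), (⟦powHalf (α i)⟧ : Game) := by
      rw [← hzv]
      exact le_antisymm (le_iff_game_le.1 e1) (le_iff_game_le.1 e2)
    refine ⟨hval, ?_, ordinalSum (ball a b) (canonNat k), hgnum, hgkb, ?_⟩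
    · refine numeric_def.2 ⟨fun i j => ?_, fun i => ?_, fun j => ?_⟩
      · rcases i with u1 | u1
        · rcases j with u2 | e2'
          · exact hab
          · exact e2'.elim
        · rcases j with u2 | e2'
          · exact hgkb
          · exact e2'.elim
      · rcases i with u1 | u1
        · exact ha
        · exact hgnum
      · rcases j with u2 | e2'
        · exact hb
        · exact e2'.elim
    · -- value of ball (g k) b
      have hgb : (ball (ordinalSum (ball a b) (canonNat k)) b).Numeric :=
        ball_numeric hgnum hb hgkb
      have f1 : ball (ordinalSum (ball a b) (canonNat k)) b ≤ z := by
        refine glh (fun i => ?_) (fun j => ?_)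
        · exact hgz
        · exact lt_of_lt_of_le (lt_iff_game_lt.1 (ball_lt hgb))
            (le_iff_game_le.1 (hz.le_right hb j))
      have f2 : z ≤ ball (ordinalSum (ball a b) (canonNat k)) b := by
        refine glh (fun i => ?_) (fun j => ?_)
        · calc (⟦z.moveLeft i⟧ : Game) ≤ ⟦ball L b⟧ := le_iff_game_le.1 (hz.left_le hx i)
            _ = ⟦ordinalSum (ball a b) (canonNat k)⟧ := by rw [hLv, hgv]
            _ < ⟦ball (ordinalSum (ball a b) (canonNat k)) b⟧ :=
                lt_iff_game_lt.1 (lt_ball hgb)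
        · exact hzB
      rw [← hzv]
      exact le_antisymm (le_iff_game_le.1 f1) (le_iff_game_le.1 f2)

end GOS

namespace GOS

open SetTheory PGame

lemma osNeg (a b : PGame.{u}) : ∀ H : PGame.{u},
    ordinalSum (ball a b) (-H) = -(ordinalSum (ball (-b) (-a)) H) := by
  intro H
  induction H using PGame.moveRecOn with
  | _ H IHl IHr =>
    obtain ⟨yl, yr, yL, yR⟩ := H
    show PGame.mk (PUnit ⊕ yr) (PUnit ⊕ yl)
        (Sum.elim (fun _ => a) (fun j => ordinalSum (ball a b) (-(yR j))))
        (Sum.elim (fun _ => b) (fun j => ordinalSum (ball a b) (-(yL j))))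
      = PGame.mk (PUnit ⊕ yr) (PUnit ⊕ yl)
        (fun i => -(Sum.elim (fun _ => (-a : PGame))
            (fun j => ordinalSum (ball (-b) (-a)) (yR j)) i))
        (fun i => -(Sum.elim (fun _ => (-b : PGame))
            (fun j => ordinalSum (ball (-b) (-a)) (yL j)) i))
    congr 1
    · funext i
      rcases i with u | j
      · show a = -(-a)
        rw [neg_neg]
      · exact IHr j
    · funext i
      rcases i with u | j
      · show b = -(-b)
        rw [neg_neg]
      · exact IHl j

lemma canonInt_neg_coe (k : ℕ) (hk : 0 < k) : canonInt (-(k : ℤ)) = -canonNat k := by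
  rw [canonInt, if_neg (by omega), neg_neg, Int.toNat_natCast]

end GOS

/-- General Ordinal Sum Theorem.  For a ball `G ≅ ⟨a | b⟩` of numbers with `b − G ≤ 1`
and `αᵢ` the least positive integer with `2^{−αᵢ} < (b − G) − Σ_{j<i} 2^{−αⱼ}`, one has
`G : k = G + Σ_{i<k} 2^{−αᵢ}` for every positive integer `k` in canonical form; dually
for `G − a ≤ 1`, the `βᵢ`, and `G : (−k)`. -/
theorem general_ordinalSum (a b : PGame) (ha : a.Numeric) (hb : b.Numeric)
    (hG : (ball a b).Numeric) (k : ℕ) (hk : 0 < k) :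
    (∀ α : ℕ → ℕ,
      (⟦b⟧ : Game) - ⟦ball a b⟧ ≤ 1 →
      (∀ i, i < k → 0 < α i ∧
        (⟦powHalf (α i)⟧ : Game) <
          ⟦b⟧ - ⟦ball a b⟧ - ∑ j ∈ Finset.range i, (⟦powHalf (α j)⟧ : Game) ∧
        ∀ t : ℕ, 0 < t →
          (⟦powHalf t⟧ : Game) <
            ⟦b⟧ - ⟦ball a b⟧ - ∑ j ∈ Finset.range i, (⟦powHalf (α j)⟧ : Game) →
          α i ≤ t) →
      (⟦ordinalSum (ball a b) (canonNat k)⟧ : Game) =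
        ⟦ball a b⟧ + ∑ i ∈ Finset.range k, (⟦powHalf (α i)⟧ : Game)) ∧
    (∀ β : ℕ → ℕ,
      (⟦ball a b⟧ : Game) - ⟦a⟧ ≤ 1 →
      (∀ i, i < k → 0 < β i ∧
        (⟦powHalf (β i)⟧ : Game) <
          ⟦ball a b⟧ - ⟦a⟧ - ∑ j ∈ Finset.range i, (⟦powHalf (β j)⟧ : Game) ∧
        ∀ t : ℕ, 0 < t →
          (⟦powHalf t⟧ : Game) <
            ⟦ball a b⟧ - ⟦a⟧ - ∑ j ∈ Finset.range i, (⟦powHalf (β j)⟧ : Game) →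
          β i ≤ t) →
      (⟦ordinalSum (ball a b) (canonInt (-(k : ℤ)))⟧ : Game) =
        ⟦ball a b⟧ - ∑ i ∈ Finset.range k, (⟦powHalf (β i)⟧ : Game)) := by
  constructor
  · intro α hb1 hα
    exact (GOS.main_pos ha hb hG k α hb1 hα k le_rfl).1
  · intro β hb1 hβ
    have hneg : ball (-b) (-a) = -(ball a b) := rfl
    have hG' : (ball (-b) (-a)).Numeric := by rw [hneg]; exact hG.neg
    have heq : (⟦-a⟧ : Game) - ⟦ball (-b) (-a)⟧ = ⟦ball a b⟧ - ⟦a⟧ := by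
      rw [hneg, quot_neg, quot_neg]
      abel
    have hb1' : (⟦-a⟧ : Game) - ⟦ball (-b) (-a)⟧ ≤ 1 := by rw [heq]; exact hb1
    have hβ' : ∀ i, i < k → 0 < β i ∧
        (⟦powHalf (β i)⟧ : Game) <
          ⟦-a⟧ - ⟦ball (-b) (-a)⟧ - ∑ j ∈ Finset.range i, (⟦powHalf (β j)⟧ : Game) ∧
        ∀ t : ℕ, 0 < t →
          (⟦powHalf t⟧ : Game) <
            ⟦-a⟧ - ⟦ball (-b) (-a)⟧ - ∑ j ∈ Finset.range i, (⟦powHalf (β j)⟧ : Game) →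
          β i ≤ t := by
      intro i hi
      rw [heq]
      exact hβ i hi
    have hmain := (GOS.main_pos hb.neg ha.neg hG' k β hb1' hβ' k le_rfl).1
    have hos : ordinalSum (ball a b) (canonInt (-(k : ℤ))) =
        -(ordinalSum (ball (-b) (-a)) (canonNat k)) := by
      rw [GOS.canonInt_neg_coe k hk]
      exact GOS.osNeg a b (canonNat k)
    rw [hos, quot_neg, hmain, hneg, quot_neg]
    abel
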